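/- Let V = {1, 2, …, N} with N ≥ 7 and let E be the set of all 2-intervals of V (unions of at most two intervals of consecutive integers). Then a linear ordering π of V is an ABABA-free ordering of the hypergraph H = (V, E) if and only if π is the ordering 1, 2, …, N or the ordering N, N−1, …, 1. -/

import Mathlib

/-- `π` is a linear ordering of the vertex set `Vs`: a duplicate-free list
consisting of exactly the elements of `Vs`. -/
def IsOrderingOf {α : Type*} (Vs : Set α) (π : List α) : Prop :=
  π.Nodup ∧ ∀ v, v ∈ π ↔ v ∈ Vs

/-- The sets `A`, `B` form an alternating pattern of length `n` with respect to
the ordering `π`: there are `n` vertices occurring in this order in `π`, those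
at even positions belonging to `A \ B` and those at odd positions to `B \ A`.
For `n = 2k` this is an `(AB)^k` pattern; for `n = 2k+1` it is an `(AB)^k A`
pattern (so `n = 4` gives `ABAB` and `n = 5` gives `ABABA`). -/
def FormPattern {α : Type*} (n : ℕ) (A B : Set α) (π : List α) : Prop :=
  ∃ w : List α, w.Sublist π ∧ w.length = n ∧
    ∀ (i : ℕ) (h : i < w.length),
      (i % 2 = 0 → w[i]'h ∈ A \ B) ∧ (i % 2 = 1 → w[i]'h ∈ B \ A)

/-- `π` is a pattern-free ordering for the edge set `E`: no pair of edges forms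
an alternating pattern of length `n` with respect to `π`. -/
def FreeOrdering {α : Type*} (n : ℕ) (E : Set (Set α)) (π : List α) : Prop :=
  ∀ A ∈ E, ∀ B ∈ E, ¬ FormPattern n A B π

/-- Two orderings are equivalent if one is obtained from the other by cyclic
shifts, or by reversing the order and then applying cyclic shifts. -/
def EquivOrderings {α : Type*} (π₁ π₂ : List α) : Prop :=
  (∃ m, π₂ = π₁.rotate m) ∨ (∃ m, π₂ = π₁.reverse.rotate m)

/-- `S` is a 2-interval of `{1, …, N}`: the union of two (possibly empty)
sets of consecutive integers. -/
def IsTwoInterval (N : ℕ) (S : Set ℕ) : Prop :=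
  S ⊆ Set.Icc 1 N ∧ ∃ a b c d, S = Set.Icc a b ∪ Set.Icc c d



lemma drop_sublist_drop {α : Type*} (l : List α) {i j : ℕ} (h : i ≤ j) :
    (l.drop j).Sublist (l.drop i) := by
  have : l.drop j = (l.drop i).drop (j - i) := by
    rw [List.drop_drop]
    congr 1
    omega
  rw [this]
  exact List.drop_sublist _ _

lemma cons_getElem_sublist_drop {α : Type*} (l : List α) {i j : ℕ} (hj : j < l.length)
    (hij : i ≤ j) {t : List α} (ht : t.Sublist (l.drop (j+1))) :
    (l[j] :: t).Sublist (l.drop i) := by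
  have h1 : (l[j] :: t).Sublist (l[j] :: l.drop (j+1)) := ht.cons₂ _
  rw [List.getElem_cons_drop] at h1
  exact h1.trans (drop_sublist_drop l hij)

lemma sublist5 {α : Type*} (l : List α) {i1 i2 i3 i4 i5 : ℕ}
    (h12 : i1 < i2) (h23 : i2 < i3) (h34 : i3 < i4) (h45 : i4 < i5) (h5 : i5 < l.length) :
    ([l[i1]'(by omega), l[i2]'(by omega), l[i3]'(by omega), l[i4]'(by omega),
      l[i5]'h5]).Sublist l := by
  have t5 : ([l[i5]'h5] : List α).Sublist (l.drop (i4+1)) :=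
    cons_getElem_sublist_drop l h5 (by omega) (List.nil_sublist _)
  have t4 : ([l[i4]'(by omega), l[i5]'h5] : List α).Sublist (l.drop (i3+1)) :=
    cons_getElem_sublist_drop l (by omega) (by omega) t5
  have t3 := cons_getElem_sublist_drop l (by omega : i3 < l.length) (by omega : i2 + 1 ≤ i3) t4
  have t2 := cons_getElem_sublist_drop l (by omega : i2 < l.length) (by omega : i1 + 1 ≤ i2) t3
  have t1 := cons_getElem_sublist_drop l (by omega : i1 < l.length) (by omega : 0 ≤ i1) t2
  simpa using t1

/-- If a 2-interval contains three values and misses two values interleaved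
between them (in either monotone order), contradiction. -/
lemma no_pattern_mono (A : Set ℕ) (ha : ∃ a b c d, A = Set.Icc a b ∪ Set.Icc c d)
    (v0 v1 v2 v3 v4 : ℕ)
    (hmono : (v0 < v1 ∧ v1 < v2 ∧ v2 < v3 ∧ v3 < v4) ∨
             (v4 < v3 ∧ v3 < v2 ∧ v2 < v1 ∧ v1 < v0))
    (h0 : v0 ∈ A) (h2 : v2 ∈ A) (h4 : v4 ∈ A) (h1 : v1 ∉ A) (h3 : v3 ∉ A) : False := by
  obtain ⟨a, b, c, d, rfl⟩ := ha
  simp only [Set.mem_union, Set.mem_Icc, not_or, not_and, not_le] at h0 h1 h2 h3 h4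
  omega

/-- Build an ABABA pattern from three elements of a 2-interval `A` located at
positions with gaps of size at least 2, whose gap-successors avoid `A`. -/
lemma pattern_exists (N : ℕ) (π : List ℕ) (hnd : π.Nodup)
    (hV : ∀ v ∈ π, v ∈ Set.Icc 1 N) (A : Set ℕ) (hA : IsTwoInterval N A)
    {j1 j2 j3 : ℕ} (g12 : j1 + 2 ≤ j2) (g23 : j2 + 2 ≤ j3) (hlen : j3 < π.length)
    (m1 : π[j1]'(by omega) ∈ A) (m2 : π[j2]'(by omega) ∈ A) (m3 : π[j3]'hlen ∈ A)
    (hl1 : π[j1+1]'(by omega) ∉ A) (hl2 : π[j2+1]'(by omega) ∉ A) :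
    ∃ B, IsTwoInterval N B ∧ FormPattern 5 A B π := by
  have hne : ∀ (i j : ℕ) (hi : i < π.length) (hj : j < π.length), i ≠ j →
      π[i]'hi ≠ π[j]'hj := by
    intro i j hi hj hij heq
    apply hij
    rw [← List.Nodup.idxOf_getElem hnd i hi, ← List.Nodup.idxOf_getElem hnd j hj, heq]
  set b1 := π[j1+1]'(by omega) with hb1
  set b2 := π[j2+1]'(by omega) with hb2
  refine ⟨Set.Icc b1 b1 ∪ Set.Icc b2 b2, ⟨?_, b1, b1, b2, b2, rfl⟩, ?_⟩
  · intro v hv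
    simp only [Set.Icc_self, Set.mem_union, Set.mem_singleton_iff] at hv
    rcases hv with rfl | rfl
    · exact hV _ (List.getElem_mem _)
    · exact hV _ (List.getElem_mem _)
  · have hBiff : ∀ v, v ∈ (Set.Icc b1 b1 ∪ Set.Icc b2 b2 : Set ℕ) ↔ (v = b1 ∨ v = b2) := by
      intro v; simp [Set.Icc_self]; tauto
    refine ⟨[π[j1]'(by omega), b1, π[j2]'(by omega), b2, π[j3]'hlen],
      sublist5 π (by omega) (by omega) (by omega) (by omega) hlen, rfl, ?_⟩
    intro i hi
    have hi5 : i < 5 := by simpa using hi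
    interval_cases i
    · refine ⟨fun _ => ?_, fun h => by omega⟩
      simp only [List.getElem_cons_zero]
      refine ⟨m1, ?_⟩
      rw [hBiff]
      push_neg
      exact ⟨hne _ _ _ _ (by omega), hne _ _ _ _ (by omega)⟩
    · refine ⟨fun h => by omega, fun _ => ?_⟩
      simp only [List.getElem_cons_succ, List.getElem_cons_zero]
      exact ⟨(hBiff b1).2 (Or.inl rfl), hl1⟩
    · refine ⟨fun _ => ?_, fun h => by omega⟩
      simp only [List.getElem_cons_succ, List.getElem_cons_zero]
      refine ⟨m2, ?_⟩
      rw [hBiff]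
      push_neg
      exact ⟨hne _ _ _ _ (by omega), hne _ _ _ _ (by omega)⟩
    · refine ⟨fun h => by omega, fun _ => ?_⟩
      simp only [List.getElem_cons_succ, List.getElem_cons_zero]
      exact ⟨(hBiff b2).2 (Or.inr rfl), hl2⟩
    · refine ⟨fun _ => ?_, fun h => by omega⟩
      simp only [List.getElem_cons_succ, List.getElem_cons_zero]
      refine ⟨m3, ?_⟩
      rw [hBiff]
      push_neg
      exact ⟨hne _ _ _ _ (by omega), hne _ _ _ _ (by omega)⟩

/-- In an ABABA-free ordering, consecutive integers cannot be ≥2 apart. -/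
lemma not_far (N : ℕ) (hN : 7 ≤ N) (π : List ℕ) (hπ : IsOrderingOf (Set.Icc 1 N) π)
    (hfree : FreeOrdering 5 {S | IsTwoInterval N S} π)
    (x y1 y2 : ℕ) (hx1 : 1 ≤ x) (hx2 : x + 1 ≤ N)
    (hy : (y1 = x ∧ y2 = x + 1) ∨ (y1 = x + 1 ∧ y2 = x))
    (hpq : π.idxOf y1 + 2 ≤ π.idxOf y2) : False := by
  obtain ⟨hnd, hmem⟩ := hπ
  have hV : ∀ v ∈ π, v ∈ Set.Icc 1 N := fun v hv => (hmem v).1 hv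
  have hy1V : y1 ∈ Set.Icc 1 N := by
    rcases hy with ⟨rfl, -⟩ | ⟨rfl, -⟩ <;> simp only [Set.mem_Icc] <;> omega
  have hy2V : y2 ∈ Set.Icc 1 N := by
    rcases hy with ⟨-, rfl⟩ | ⟨-, rfl⟩ <;> simp only [Set.mem_Icc] <;> omega
  have hy1π : y1 ∈ π := (hmem y1).2 hy1V
  have hy2π : y2 ∈ π := (hmem y2).2 hy2V
  set p := π.idxOf y1 with hp
  set q := π.idxOf y2 with hq
  have hpl : p < π.length := List.idxOf_lt_length_iff.2 hy1π
  have hql : q < π.length := List.idxOf_lt_length_iff.2 hy2π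
  have hgp : π[p]'hpl = y1 := List.getElem_idxOf _
  have hgq : π[q]'hql = y2 := List.getElem_idxOf _
  have key : ∀ z, z ∈ Set.Icc 1 N → z ≠ x → z ≠ x + 1 →
      (π.idxOf z = p - 1 ∨ π.idxOf z = p + 1 ∨
       π.idxOf z = q - 1 ∨ π.idxOf z = q + 1) := by
    intro z hz hzx hzx1
    by_contra hcon
    push_neg at hcon
    obtain ⟨hc1, hc2, hc3, hc4⟩ := hcon
    have hzπ : z ∈ π := (hmem z).2 hz
    set r := π.idxOf z with hrdef
    have hrl : r < π.length := List.idxOf_lt_length_iff.2 hzπ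
    have hgr : π[r]'hrl = z := List.getElem_idxOf _
    have hzy1 : z ≠ y1 := by rcases hy with ⟨rfl, -⟩ | ⟨rfl, -⟩ <;> assumption
    have hzy2 : z ≠ y2 := by rcases hy with ⟨-, rfl⟩ | ⟨-, rfl⟩ <;> assumption
    have hrp : r ≠ p := fun h => hzy1 ((List.idxOf_inj hzπ).1 (by rw [← hrdef, ← hp, h]))
    have hrq : r ≠ q := fun h => hzy2 ((List.idxOf_inj hzπ).1 (by rw [← hrdef, ← hq, h]))
    set A : Set ℕ := Set.Icc x (x+1) ∪ Set.Icc z z with hAdef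
    have hzV' : 1 ≤ z ∧ z ≤ N := by simpa [Set.mem_Icc] using hz
    have hAint : IsTwoInterval N A := by
      refine ⟨?_, x, x+1, z, z, rfl⟩
      intro v hv
      simp only [hAdef, Set.mem_union, Set.mem_Icc] at hv ⊢
      omega
    have hy1A : y1 ∈ A := by
      rcases hy with ⟨rfl, -⟩ | ⟨rfl, -⟩ <;>
        simp only [hAdef, Set.mem_union, Set.mem_Icc] <;> omega
    have hy2A : y2 ∈ A := by
      rcases hy with ⟨-, rfl⟩ | ⟨-, rfl⟩ <;>
        simp only [hAdef, Set.mem_union, Set.mem_Icc] <;> omega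
    have hzA : z ∈ A := by simp [hAdef]
    have keyA : ∀ (i : ℕ) (hi : i < π.length), π[i]'hi ∈ A → i = p ∨ i = q ∨ i = r := by
      intro i hi hiA
      have hval : π[i]'hi = x ∨ π[i]'hi = x + 1 ∨ π[i]'hi = z := by
        simp only [hAdef, Set.mem_union, Set.mem_Icc] at hiA
        omega
      have hidx : π.idxOf (π[i]'hi) = i := List.Nodup.idxOf_getElem hnd i hi
      have hxy : (x = y1 ∧ x + 1 = y2) ∨ (x = y2 ∧ x + 1 = y1) := by
        rcases hy with ⟨rfl, rfl⟩ | ⟨rfl, rfl⟩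
        · exact Or.inl ⟨rfl, rfl⟩
        · exact Or.inr ⟨rfl, rfl⟩
      rcases hval with h | h | h
      · rcases hxy with ⟨h1, -⟩ | ⟨h1, -⟩
        · left; rw [← hidx, h, h1]
        · right; left; rw [← hidx, h, h1]
      · rcases hxy with ⟨-, h1⟩ | ⟨-, h1⟩
        · right; left; rw [← hidx, h, h1]
        · left; rw [← hidx, h, h1]
      · right; right; rw [← hidx, h]
    -- three cases for the position of r relative to p < q
    have hfreeA : ∀ B, IsTwoInterval N B → ¬ FormPattern 5 A B π := fun B hB =>
      hfree A hAint B hB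
    rcases Nat.lt_trichotomy r p with h | h | h
    · -- r < p, gaps: r+2 ≤ p, p+2 ≤ q
      have g1 : r + 2 ≤ p := by omega
      have g2 : p + 2 ≤ q := hpq
      have hl1 : π[r+1]'(by omega) ∉ A := by
        intro hmemA
        rcases keyA (r+1) (by omega) hmemA with h' | h' | h' <;> omega
      have hl2 : π[p+1]'(by omega) ∉ A := by
        intro hmemA
        rcases keyA (p+1) (by omega) hmemA with h' | h' | h' <;> omega
      obtain ⟨B, hB, hpat⟩ := pattern_exists N π hnd hV A hAint g1 g2 hql
        (hgr ▸ hzA) (hgp ▸ hy1A) (hgq ▸ hy2A) hl1 hl2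
      exact hfreeA B hB hpat
    · exact hrp h
    · rcases Nat.lt_trichotomy r q with h' | h' | h'
      · -- p < r < q
        have g1 : p + 2 ≤ r := by omega
        have g2 : r + 2 ≤ q := by omega
        have hl1 : π[p+1]'(by omega) ∉ A := by
          intro hmemA
          rcases keyA (p+1) (by omega) hmemA with h'' | h'' | h'' <;> omega
        have hl2 : π[r+1]'(by omega) ∉ A := by
          intro hmemA
          rcases keyA (r+1) (by omega) hmemA with h'' | h'' | h'' <;> omega
        obtain ⟨B, hB, hpat⟩ := pattern_exists N π hnd hV A hAint g1 g2 hql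
          (hgp ▸ hy1A) (hgr ▸ hzA) (hgq ▸ hy2A) hl1 hl2
        exact hfreeA B hB hpat
      · exact hrq h'
      · -- q < r
        have g1 : p + 2 ≤ q := hpq
        have g2 : q + 2 ≤ r := by omega
        have hl1 : π[p+1]'(by omega) ∉ A := by
          intro hmemA
          rcases keyA (p+1) (by omega) hmemA with h'' | h'' | h'' <;> omega
        have hl2 : π[q+1]'(by omega) ∉ A := by
          intro hmemA
          rcases keyA (q+1) (by omega) hmemA with h'' | h'' | h'' <;> omega
        obtain ⟨B, hB, hpat⟩ := pattern_exists N π hnd hV A hAint g1 g2 hrl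
          (hgp ▸ hy1A) (hgq ▸ hy2A) (hgr ▸ hzA) hl1 hl2
        exact hfreeA B hB hpat
  -- pigeonhole: N - 2 elements map injectively into a 4-element set
  have hxx1 : x ≠ x + 1 := by omega
  have hsub : ({x, x+1} : Finset ℕ) ⊆ Finset.Icc 1 N := by
    intro v hv
    simp only [Finset.mem_insert, Finset.mem_singleton] at hv
    rcases hv with rfl | rfl <;> simp only [Finset.mem_Icc] <;> omega
  have hcards : (Finset.Icc 1 N \ {x, x+1}).card = N - 2 := by
    rw [Finset.card_sdiff_of_subset hsub]
    simp [Finset.card_insert_of_notMem, hxx1, Nat.card_Icc]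
  have hmapsto : ∀ z ∈ Finset.Icc 1 N \ {x, x+1},
      π.idxOf z ∈ ({p - 1, p + 1, q - 1, q + 1} : Finset ℕ) := by
    intro z hz
    simp only [Finset.mem_sdiff, Finset.mem_Icc, Finset.mem_insert,
      Finset.mem_singleton, not_or] at hz
    have := key z (by simp only [Set.mem_Icc]; omega) hz.2.1 hz.2.2
    simp only [Finset.mem_insert, Finset.mem_singleton]
    tauto
  have hinj : Set.InjOn (fun z => π.idxOf z) ↑(Finset.Icc 1 N \ {x, x+1}) := by
    intro z1 hz1 z2 hz2 heq
    simp only [Finset.coe_sdiff, Set.mem_diff, Finset.coe_Icc, Set.mem_Icc] at hz1 hz2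
    have hz1π : z1 ∈ π := (hmem z1).2 (by simp only [Set.mem_Icc]; omega)
    have hz2π : z2 ∈ π := (hmem z2).2 (by simp only [Set.mem_Icc]; omega)
    exact (List.idxOf_inj hz1π).1 heq
  have hcard4 : ({p - 1, p + 1, q - 1, q + 1} : Finset ℕ).card ≤ 4 := by
    have h1 := Finset.card_insert_le (p-1) ({p+1, q-1, q+1} : Finset ℕ)
    have h2 := Finset.card_insert_le (p+1) ({q-1, q+1} : Finset ℕ)
    have h3 := Finset.card_insert_le (q-1) ({q+1} : Finset ℕ)
    simp only [Finset.card_singleton] at h3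
    omega
  have := Finset.card_le_card_of_injOn _ hmapsto hinj
  omega


/-- **Lemma (two intervals).** Let `V = {1, …, N}` with `N ≥ 7` and let `E` be
the set of all 2-intervals of `V`. Then an ordering `π` of `V` is an
`ABABA`-free ordering of the hypergraph `(V, E)` if and only if `π` is the
ordering `1, 2, …, N` or the ordering `N, N-1, …, 1`. -/
theorem two_intervals_ABABA_free_iff (N : ℕ) (hN : 7 ≤ N) (π : List ℕ)
    (hπ : IsOrderingOf (Set.Icc 1 N) π) :
    FreeOrdering 5 {S | IsTwoInterval N S} π ↔
      π = List.range' 1 N ∨ π = (List.range' 1 N).reverse := by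
  constructor
  · intro hfree
    obtain ⟨hnd, hmem⟩ := hπ
    have hmemπ : ∀ v, 1 ≤ v → v ≤ N → v ∈ π := fun v h1 h2 =>
      (hmem v).2 (by simp only [Set.mem_Icc]; exact ⟨h1, h2⟩)
    have hlen : π.length = N := by
      have htf : π.toFinset = Finset.Icc 1 N := by
        ext v
        simp only [List.mem_toFinset, hmem v, Set.mem_Icc, Finset.mem_Icc]
      have := List.toFinset_card_of_nodup hnd
      rw [htf] at this
      simp only [Nat.card_Icc] at this
      omega
    have hadj : ∀ k, 1 ≤ k → k + 1 ≤ N →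
        π.idxOf (k+1) = π.idxOf k + 1 ∨ π.idxOf k = π.idxOf (k+1) + 1 := by
      intro k h1 h2
      by_contra hc
      push_neg at hc
      have hk : k ∈ π := hmemπ k h1 (by omega)
      have hk1 : (k+1) ∈ π := hmemπ (k+1) (by omega) h2
      have hne : π.idxOf k ≠ π.idxOf (k+1) := fun h => by
        have := (List.idxOf_inj hk).1 h; omega
      rcases Nat.lt_or_ge (π.idxOf k) (π.idxOf (k+1)) with h | h
      · exact not_far N hN π ⟨hnd, hmem⟩ hfree k k (k+1) h1 h2 (Or.inl ⟨rfl, rfl⟩) (by omega)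
      · exact not_far N hN π ⟨hnd, hmem⟩ hfree k (k+1) k h1 h2 (Or.inr ⟨rfl, rfl⟩) (by omega)
    have hPlt : ∀ v, 1 ≤ v → v ≤ N → π.idxOf v < N := fun v h1 h2 => by
      have := List.idxOf_lt_length_iff.2 (hmemπ v h1 h2); omega
    have hPinj : ∀ u v, 1 ≤ u → u ≤ N → 1 ≤ v → v ≤ N →
        π.idxOf u = π.idxOf v → u = v := fun u v hu1 hu2 hv1 hv2 h =>
      (List.idxOf_inj (hmemπ u hu1 hu2)).1 h
    rcases hadj 1 le_rfl (by omega) with hdir | hdir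
    · -- increasing case
      left
      have step : ∀ k, 1 ≤ k → k + 1 ≤ N → π.idxOf (k+1) = π.idxOf k + 1 := by
        intro k hk
        induction k, hk using Nat.le_induction with
        | base => intro _; exact hdir
        | succ k hk ih =>
          intro h2
          rcases hadj (k+1) (by omega) h2 with h | h
          · exact h
          · exfalso
            have ihh := ih (by omega)
            have : π.idxOf (k+1+1) = π.idxOf k := by omega
            have := hPinj (k+1+1) k (by omega) (by omega) (by omega) (by omega) this
            omega
      have formula : ∀ k, 1 ≤ k → k ≤ N → π.idxOf k = π.idxOf 1 + (k - 1) := by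
        intro k hk
        induction k, hk using Nat.le_induction with
        | base => intro _; simp
        | succ k hk ih =>
          intro h2
          have := step k hk (by omega)
          have := ih (by omega)
          omega
      have h1zero : π.idxOf 1 = 0 := by
        have hfN := formula N (by omega) le_rfl
        have := hPlt N (by omega) le_rfl
        omega
      apply List.ext_getElem (by simp [hlen])
      intro i h1 h2
      have hiV : π[i] ∈ Set.Icc 1 N := (hmem _).1 (List.getElem_mem _)
      simp only [Set.mem_Icc] at hiV
      have hidx : π.idxOf (π[i]'h1) = i := List.Nodup.idxOf_getElem hnd i h1
      have hform := formula (π[i]'h1) hiV.1 hiV.2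
      simp only [List.getElem_range']
      omega
    · -- decreasing case
      right
      have step : ∀ k, 1 ≤ k → k + 1 ≤ N → π.idxOf k = π.idxOf (k+1) + 1 := by
        intro k hk
        induction k, hk using Nat.le_induction with
        | base => intro _; exact hdir
        | succ k hk ih =>
          intro h2
          rcases hadj (k+1) (by omega) h2 with h | h
          · exfalso
            have ihh := ih (by omega)
            have : π.idxOf (k+1+1) = π.idxOf k := by omega
            have := hPinj (k+1+1) k (by omega) (by omega) (by omega) (by omega) this
            omega
          · exact h
      have formula : ∀ k, 1 ≤ k → k ≤ N → π.idxOf k + k = π.idxOf 1 + 1 := by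
        intro k hk
        induction k, hk using Nat.le_induction with
        | base => intro _; simp
        | succ k hk ih =>
          intro h2
          have := step k hk (by omega)
          have := ih (by omega)
          omega
      have h1top : π.idxOf 1 = N - 1 := by
        have hfN := formula N (by omega) le_rfl
        have := hPlt N (by omega) le_rfl
        have := hPlt 1 (by omega) (by omega)
        omega
      apply List.ext_getElem (by simp [hlen])
      intro i h1 h2
      have hiV : π[i] ∈ Set.Icc 1 N := (hmem _).1 (List.getElem_mem _)
      simp only [Set.mem_Icc] at hiV
      have hidx : π.idxOf (π[i]'h1) = i := List.Nodup.idxOf_getElem hnd i h1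
      have hform := formula (π[i]'h1) hiV.1 hiV.2
      have hiN : i < N := by omega
      simp only [List.getElem_reverse, List.length_range', List.getElem_range']
      omega
  · intro hcase
    intro A hA B hB hpat
    obtain ⟨w, hsub, hwlen, hcond⟩ := hpat
    rcases w with _ | ⟨v0, _ | ⟨v1, _ | ⟨v2, _ | ⟨v3, _ | ⟨v4, _ | ⟨v5, w⟩⟩⟩⟩⟩⟩ <;>
      simp only [List.length_cons, List.length_nil] at hwlen
    pick_goal 6
    · -- exactly 5 elements
      have c0 := (hcond 0 (by simp)).1 (by norm_num)
      have c1 := (hcond 1 (by simp)).2 (by norm_num)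
      have c2 := (hcond 2 (by simp)).1 (by norm_num)
      have c3 := (hcond 3 (by simp)).2 (by norm_num)
      have c4 := (hcond 4 (by simp)).1 (by norm_num)
      simp only [List.getElem_cons_zero, List.getElem_cons_succ] at c0 c1 c2 c3 c4
      have hmono : (v0 < v1 ∧ v1 < v2 ∧ v2 < v3 ∧ v3 < v4) ∨
          (v4 < v3 ∧ v3 < v2 ∧ v2 < v1 ∧ v1 < v0) := by
        rcases hcase with rfl | rfl
        · left
          have hpw : ([v0, v1, v2, v3, v4] : List ℕ).Pairwise (· < ·) :=
            (List.pairwise_lt_range' (s := 1) (n := N)).sublist hsub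
          simp only [List.pairwise_cons, List.mem_cons, List.mem_singleton,
            List.not_mem_nil] at hpw
          refine ⟨?_, ?_, ?_, ?_⟩ <;> [exact hpw.1 v1 (by simp);
            exact hpw.2.1 v2 (by simp); exact hpw.2.2.1 v3 (by simp);
            exact hpw.2.2.2.1 v4 (by simp)]
        · right
          have hpw : ([v0, v1, v2, v3, v4] : List ℕ).Pairwise (· > ·) := by
            refine List.Pairwise.sublist hsub ?_
            rw [List.pairwise_reverse]
            exact List.pairwise_lt_range' (s := 1) (n := N)
          simp only [List.pairwise_cons, List.mem_cons, List.mem_singleton,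
            List.not_mem_nil] at hpw
          refine ⟨?_, ?_, ?_, ?_⟩ <;> [exact hpw.2.2.2.1 v4 (by simp);
            exact hpw.2.2.1 v3 (by simp); exact hpw.2.1 v2 (by simp);
            exact hpw.1 v1 (by simp)]
      exact no_pattern_mono A hA.2 v0 v1 v2 v3 v4 hmono c0.1 c2.1 c4.1 c1.2 c3.2
    all_goals omega
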